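/- Let γ₁ < ... < γ_{l+1}, γ̃ := (γ₂-γ₁,...,γ_{l+1}-γ_l), and g := (1/h)(𝟙ⱼ^β - 𝟙ᵢ^α) ∈ ℝˡ with i ≤ j (and β ≥ α if i = j). Then ⟨γ̃, g⟩ = (1/h)(γⱼ^β - γᵢ^α) = sup_{q∈K}⟨q,g⟩ where K := {q ∈ ℝˡ : |q_k| ≤ γ_{k+1}-γ_k ∀k}; i.e., γ̃ itself is a dual maximizer whenever g has nonnegative entries. -/

import Mathlib

open scoped BigOperators

/-- The lifted representative `𝟙ᵢ^α = α𝟙ᵢ + (1-α)𝟙_{i-1} ∈ ℝˡ` (with zero-based index `i`):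
entries `1` below `i`, value `α` at `i`, `0` above. -/
def oneVec {l : ℕ} (i : Fin l) (α : ℝ) : Fin l → ℝ :=
  fun k => if (k : ℕ) < (i : ℕ) then 1 else if k = i then α else 0

/-- The sublabel value `γᵢ^α = γᵢ + α(γ_{i+1} - γᵢ)` (zero-based index `i`). -/
def gam {l : ℕ} (γ : Fin (l + 1) → ℝ) (i : Fin l) (α : ℝ) : ℝ :=
  γ i.castSucc + α * (γ i.succ - γ i.castSucc)

open Fin.NatCast in
/-- Telescoping key: `⟨γ̃, 𝟙ᵢ^α⟩ = γᵢ^α - γ₀`. -/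
lemma key_sum {l : ℕ} (γ : Fin (l + 1) → ℝ) (i : Fin l) (α : ℝ) :
    ∑ k : Fin l, (γ k.succ - γ k.castSucc) * oneVec i α k = gam γ i α - γ 0 := by
  set f : ℕ → ℝ := fun n => γ ((n : ℕ) : Fin (l + 1)) with hf
  have hcastS : ∀ k : Fin l, γ k.castSucc = f (k : ℕ) := by
    intro k
    simp only [hf]
    congr 1
    ext
    simp [Fin.val_cast_of_lt (Nat.lt_succ_of_lt k.isLt)]
  have hsuccS : ∀ k : Fin l, γ k.succ = f ((k : ℕ) + 1) := by
    intro k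
    simp only [hf]
    congr 1
    ext
    simp [Fin.val_cast_of_lt (Nat.succ_lt_succ k.isLt)]
  have hterm : ∀ k : Fin l, (γ k.succ - γ k.castSucc) * oneVec i α k
      = (if (k : ℕ) < (i : ℕ) then f ((k : ℕ) + 1) - f (k : ℕ) else 0)
        + (if (k : ℕ) = (i : ℕ) then α * (f ((k : ℕ) + 1) - f (k : ℕ)) else 0) := by
    intro k
    rw [hcastS k, hsuccS k]
    simp only [oneVec, Fin.ext_iff]
    split_ifs <;> first | ring1 | omega
  rw [Finset.sum_congr rfl (fun k _ => hterm k), Finset.sum_add_distrib]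
  have h1 : ∑ k : Fin l, (if (k : ℕ) < (i : ℕ) then f ((k : ℕ) + 1) - f (k : ℕ) else 0)
      = f (i : ℕ) - f 0 := by
    rw [Fin.sum_univ_eq_sum_range (fun n => if n < (i : ℕ) then f (n + 1) - f n else 0) l]
    rw [← Finset.sum_filter]
    have hfilt : (Finset.range l).filter (· < (i : ℕ)) = Finset.range (i : ℕ) := by
      ext n
      simp only [Finset.mem_filter, Finset.mem_range]
      have := i.isLt
      omega
    rw [hfilt, Finset.sum_range_sub f (i : ℕ)]
  have h2 : ∑ k : Fin l, (if (k : ℕ) = (i : ℕ) then α * (f ((k : ℕ) + 1) - f (k : ℕ)) else 0)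
      = α * (f ((i : ℕ) + 1) - f (i : ℕ)) := by
    rw [Fintype.sum_eq_single i (fun k hk => if_neg (fun hc => hk (Fin.ext hc)))]
    exact if_pos rfl
  rw [h1, h2, gam, hcastS i, hsuccS i]
  have h0 : γ 0 = f 0 := by simp [hf]
  rw [h0]
  ring

theorem gamma_tilde_is_dual_maximizer {l : ℕ} (γ : Fin (l + 1) → ℝ) (hγ : StrictMono γ)
    (i j : Fin l) (hij : i ≤ j)
    (α β : ℝ) (hα : α ∈ Set.Icc (0 : ℝ) 1) (hβ : β ∈ Set.Icc (0 : ℝ) 1)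
    (hord : i = j → α ≤ β)
    (h : ℝ) (hh : 0 < h)
    (g : Fin l → ℝ) (hg : g = (1 / h) • (oneVec j β - oneVec i α))
    (K : Set (Fin l → ℝ))
    (hK : K = {q : Fin l → ℝ | ∀ k : Fin l, |q k| ≤ γ k.succ - γ k.castSucc}) :
    ∑ k : Fin l, (γ k.succ - γ k.castSucc) * g k = (1 / h) * (gam γ j β - gam γ i α) ∧
    sSup {x : ℝ | ∃ q ∈ K, x = ∑ k : Fin l, q k * g k}
      = (1 / h) * (gam γ j β - gam γ i α) := by
  obtain ⟨hα0, hα1⟩ := hα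
  obtain ⟨hβ0, hβ1⟩ := hβ
  have hij' : (i : ℕ) ≤ (j : ℕ) := hij
  -- g is entrywise nonnegative
  have hgnn : ∀ k : Fin l, 0 ≤ g k := by
    intro k
    rw [hg]
    simp only [Pi.smul_apply, Pi.sub_apply, smul_eq_mul]
    apply mul_nonneg (by positivity)
    rw [sub_nonneg]
    rcases eq_or_lt_of_le hij with rfl | hlt
    · have hab := hord rfl
      simp only [oneVec, Fin.ext_iff]
      split_ifs <;> linarith
    · have hlt' : (i : ℕ) < (j : ℕ) := hlt
      simp only [oneVec, Fin.ext_iff]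
      split_ifs <;> linarith
  -- the sum identity
  have hsum : ∑ k : Fin l, (γ k.succ - γ k.castSucc) * g k
      = (1 / h) * (gam γ j β - gam γ i α) := by
    rw [hg]
    simp only [Pi.smul_apply, Pi.sub_apply, smul_eq_mul]
    have hterm : ∀ k : Fin l, (γ k.succ - γ k.castSucc) * (1 / h * (oneVec j β k - oneVec i α k))
        = 1 / h * ((γ k.succ - γ k.castSucc) * oneVec j β k
            - (γ k.succ - γ k.castSucc) * oneVec i α k) := fun k => by ring
    rw [Finset.sum_congr rfl (fun k _ => hterm k), ← Finset.mul_sum,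
      Finset.sum_sub_distrib, key_sum γ j β, key_sum γ i α]
    ring
  refine ⟨hsum, ?_⟩
  have hgtnn : ∀ k : Fin l, 0 ≤ γ k.succ - γ k.castSucc := by
    intro k
    exact sub_nonneg.2 (hγ k.castSucc_lt_succ).le
  apply IsGreatest.csSup_eq
  constructor
  · exact ⟨fun k => γ k.succ - γ k.castSucc,
      by rw [hK]; intro k; rw [abs_of_nonneg (hgtnn k)], hsum.symm⟩
  · rintro x ⟨q, hq, rfl⟩
    rw [hK] at hq
    rw [← hsum]
    apply Finset.sum_le_sum
    intro k _
    exact mul_le_mul_of_nonneg_right ((le_abs_self _).trans (hq k)) (hgnn k)
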